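/- Let (J,t,t′) and (J̃,t̃,t̃′) be two parameter triples, with J, J̃ ∈ ℕ and t, t′, t̃, t̃′ ∈ ℝ, and let supp_D(J,t,t′) and supp_D(J̃,t̃,t̃′) be the corresponding compression supports built from the same data (n, r, σ, d̃, a, D). Assume J ≤ J̃, t ≤ t̃, t′ ≤ t̃′, r/2 < t, r/2 < t′, σ − n/2 > max{t̃, t̃′} − r/2, and d̃ > σ − n/2 − r/2. Then supp_D(J,t,t′) ⊆ supp_D(J̃,t̃,t̃′). -/
import Mathlib


/-- The compression threshold
`τ_{jj'} = a · max{2^{−min(j,j')}, 2^{(J(t+t'−r) − jt' − j't − (j+j')d̃)/(2d̃+r)}}`. -/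
noncomputable def tauThresh (r t t' dtil a : ℝ) (J j j' : ℕ) : ℝ :=
  a * max ((2 : ℝ) ^ (-((min j j' : ℕ) : ℝ)))
      ((2 : ℝ) ^ (((J : ℝ) * (t + t' - r) - (j : ℝ) * t' - (j' : ℝ) * t
        - ((j : ℝ) + (j' : ℝ)) * dtil) / (2 * dtil + r)))

/-- The compression support `supp_D(J,t,t')`: pairs of indices `((j,k),(j',k'))`
with scales at most `J`, distance `D` at most the threshold `τ_{jj'}`, and
satisfying the two slope conditions. -/
noncomputable def suppD {K : Type*} (n r σ dtil a : ℝ) (D : ℕ × K → ℕ × K → ℝ)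
    (J : ℕ) (t t' : ℝ) : Set ((ℕ × K) × (ℕ × K)) :=
  {p | p.1.1 ≤ J ∧ p.2.1 ≤ J ∧
    D p.1 p.2 ≤ tauThresh r t t' dtil a J p.1.1 p.2.1 ∧
    (p.1.1 : ℝ) ≤ ((t + t' - r) * J + (σ - n / 2 - (t - r / 2)) * p.2.1)
        / (σ - n / 2 + t' - r / 2) ∧
    (p.2.1 : ℝ) ≤ ((t + t' - r) * J + (σ - n / 2 - (t' - r / 2)) * p.1.1)
        / (σ - n / 2 + t - r / 2)}

/-- Monotonicity of the slope bound `(A·y + B·x)/(A+B)` when `A` grows,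
`B` shrinks (staying positive) and `y` grows, with `x ≤ y`. -/
lemma aux_frac (A B A' B' C C' x y y' : ℝ)
    (hC : C = A + B) (hC' : C' = A' + B')
    (hA : 0 < A) (hB' : 0 < B') (hAA : A ≤ A') (hBB : B' ≤ B)
    (hxy : x ≤ y) (hyy : y ≤ y') :
    (A * y + B * x) / C ≤ (A' * y' + B' * x) / C' := by
  subst hC hC'
  have h1 : (0:ℝ) < A + B := by linarith
  have h2 : (0:ℝ) < A' + B' := by linarith
  rw [div_le_div_iff₀ h1 h2]
  nlinarith [mul_nonneg (by nlinarith : (0:ℝ) ≤ A' * B - A * B') (by linarith : (0:ℝ) ≤ y' - x),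
    mul_nonneg (mul_nonneg hA.le (by linarith : (0:ℝ) ≤ A')) (by linarith : (0:ℝ) ≤ y' - y),
    mul_nonneg (mul_nonneg hA.le hB'.le) (by linarith : (0:ℝ) ≤ y' - y)]

/-- Support monotonicity: if `J ≤ J̃`, `t ≤ t̃`, `t' ≤ t̃'`, `r/2 < t`, `r/2 < t'`,
`σ − n/2 > max{t̃, t̃'} − r/2` and `d̃ > σ − n/2 − r/2`, then
`supp_D(J,t,t') ⊆ supp_D(J̃,t̃,t̃')`. -/
theorem supp_monotonicity {K : Type*}
    (n r σ dtil a : ℝ) (ha : 0 < a) (hdr : 0 < 2 * dtil + r)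
    (D : ℕ × K → ℕ × K → ℝ)
    (J Jt : ℕ) (t t' tt tt' : ℝ)
    (hJ : J ≤ Jt) (ht : t ≤ tt) (ht' : t' ≤ tt')
    (h1 : r / 2 < t) (h2 : r / 2 < t')
    (h3 : σ - n / 2 > max tt tt' - r / 2)
    (h4 : dtil > σ - n / 2 - r / 2) :
    suppD n r σ dtil a D J t t' ⊆ suppD n r σ dtil a D Jt tt tt' := by
  rintro ⟨⟨j, k⟩, ⟨j', k'⟩⟩ ⟨hj, hj', hD, hs1, hs2⟩
  simp only [suppD, Set.mem_setOf_eq] at *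
  have hJR : (J : ℝ) ≤ (Jt : ℝ) := Nat.cast_le.mpr hJ
  have hjR : (j : ℝ) ≤ (J : ℝ) := Nat.cast_le.mpr hj
  have hj'R : (j' : ℝ) ≤ (J : ℝ) := Nat.cast_le.mpr hj'
  have h3t : max tt tt' - r / 2 ≥ tt - r / 2 := by
    have := le_max_left tt tt'; linarith
  have h3t' : max tt tt' - r / 2 ≥ tt' - r / 2 := by
    have := le_max_right tt tt'; linarith
  refine ⟨le_trans hj hJ, le_trans hj' hJ, ?_, ?_, ?_⟩
  · refine le_trans hD ?_
    unfold tauThresh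
    refine mul_le_mul_of_nonneg_left (max_le_max le_rfl ?_) ha.le
    rw [Real.rpow_le_rpow_left_iff one_lt_two]
    rw [div_le_div_iff₀ hdr hdr]
    refine mul_le_mul_of_nonneg_right ?_ hdr.le
    nlinarith [mul_nonneg (sub_nonneg.mpr hJR) (by linarith : (0:ℝ) ≤ t + t' - r),
      mul_nonneg (by linarith : (0:ℝ) ≤ (Jt:ℝ) - (j:ℝ)) (by linarith : (0:ℝ) ≤ tt' - t'),
      mul_nonneg (by linarith : (0:ℝ) ≤ (Jt:ℝ) - (j':ℝ)) (by linarith : (0:ℝ) ≤ tt - t)]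
  · exact le_trans hs1 (aux_frac (t + t' - r) (σ - n / 2 - (t - r / 2))
      (tt + tt' - r) (σ - n / 2 - (tt - r / 2)) _ _ (j' : ℝ) (J : ℝ) (Jt : ℝ)
      (by ring) (by ring) (by linarith) (by linarith) (by linarith) (by linarith)
      hj'R hJR)
  · exact le_trans hs2 (aux_frac (t + t' - r) (σ - n / 2 - (t' - r / 2))
      (tt + tt' - r) (σ - n / 2 - (tt' - r / 2)) _ _ (j : ℝ) (J : ℝ) (Jt : ℝ)
      (by ring) (by ring) (by linarith) (by linarith) (by linarith) (by linarith)
      hjR hJR)
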